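/- If A is a finite-dimensional simple associative Γ-graded commutative algebra over ℝ, then the degree-zero component A₀ is isomorphic as an ℝ-algebra to ℝ or ℂ. -/

import Mathlib

open Module

lemma classifyRealField (F : Type*) [Field F] [Algebra ℝ F] [FiniteDimensional ℝ F] :
    Nonempty (F ≃ₐ[ℝ] ℝ) ∨ Nonempty (F ≃ₐ[ℝ] ℂ) := by
  have halg : Algebra.IsAlgebraic ℝ F := Algebra.IsAlgebraic.of_finite ℝ F
  let f : F →ₐ[ℝ] ℂ := IsAlgClosed.lift
  have hinj : Function.Injective f := f.toRingHom.injective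
  have hle : finrank ℝ F ≤ finrank ℝ ℂ :=
    LinearMap.finrank_le_finrank_of_injective (f := f.toLinearMap) hinj
  rw [Complex.finrank_real_complex] at hle
  have hpos : 0 < finrank ℝ F := finrank_pos
  interval_cases h : finrank ℝ F
  · left
    have hbt : (⊥ : Subalgebra ℝ F) = ⊤ := Subalgebra.bot_eq_top_iff_finrank_eq_one.2 h
    have hsurj : Function.Surjective (algebraMap ℝ F) := by
      intro x
      have : x ∈ (⊥ : Subalgebra ℝ F) := hbt ▸ trivial
      exact Algebra.mem_bot.1 this
    exact ⟨(AlgEquiv.ofBijective (Algebra.ofId ℝ F)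
      ⟨(algebraMap ℝ F).injective, hsurj⟩).symm⟩
  · right
    have hsurj : Function.Surjective f :=
      (LinearMap.injective_iff_surjective_of_finrank_eq_finrank (f := f.toLinearMap)
        (by rw [h, Complex.finrank_real_complex])).1 hinj
    exact ⟨AlgEquiv.ofBijective f ⟨hinj, hsurj⟩⟩

/-- If `A` is a finite-dimensional simple associative Γ-graded commutative
algebra over ℝ, then the degree-zero component `A₀` is isomorphic as an ℝ-algebra
to ℝ or to ℂ. -/
theorem stmt3 {Γ : Type*} [AddCommGroup Γ] [DecidableEq Γ]
    {A : Type*} [Ring A] [Algebra ℝ A] [FiniteDimensional ℝ A]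
    (bil : Γ →+ Γ →+ ZMod 2)
    (𝒜 : Γ → Submodule ℝ A) (hgr : GradedAlgebra 𝒜)
    (hcomm : ∀ (γ γ' : Γ) (a b : A), a ∈ 𝒜 γ → b ∈ 𝒜 γ' →
      a * b = (-1 : A) ^ (bil γ γ').val * (b * a))
    (hsimple : IsSimpleRing A) :
    ∃ S : Subalgebra ℝ A, Subalgebra.toSubmodule S = 𝒜 (0 : Γ) ∧
      (Nonempty (S ≃ₐ[ℝ] ℝ) ∨ Nonempty (S ≃ₐ[ℝ] ℂ)) := by
  haveI := hgr
  haveI := hsimple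
  have hcentral : ∀ x ∈ 𝒜 (0 : Γ), ∀ b : A, b * x = x * b := by
    intro x hx b
    refine DirectSum.Decomposition.inductionOn 𝒜 (motive := fun b => b * x = x * b) ?_ ?_ ?_ b
    · show (0:A) * x = x * 0
      rw [zero_mul, mul_zero]
    · intro i m
      have := hcomm 0 i x m hx m.2
      rwa [map_zero bil, AddMonoidHom.zero_apply, ZMod.val_zero, pow_zero, one_mul,
        eq_comm] at this
    · intro m m' hm hm'
      show (m + m') * x = x * (m + m')
      rw [add_mul, mul_add, hm, hm']
  refine ⟨SetLike.GradeZero.subalgebra 𝒜, SetLike.ext fun _ => Iff.rfl, ?_⟩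
  set S : Subalgebra ℝ A := SetLike.GradeZero.subalgebra 𝒜 with hS
  letI : CommRing S :=
    { (inferInstance : Ring S) with
      mul_comm := fun x y => Subtype.ext (hcentral (y : A) y.2 (x : A)) }
  letI : Field (Subring.center A) := (IsSimpleRing.isField_center A).toField
  let g : S →+* Subring.center A :=
    { toFun := fun x => ⟨(x : A), Subring.mem_center_iff.2 fun b => hcentral (x : A) x.2 b⟩
      map_one' := rfl
      map_mul' := fun _ _ => rfl
      map_zero' := rfl
      map_add' := fun _ _ => rfl }
  have ginj : Function.Injective g := fun a b h =>
    Subtype.ext (congrArg Subtype.val h : ((g a : A) = (g b : A)))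
  haveI : IsDomain S := ginj.isDomain g
  haveI : FiniteDimensional ℝ S := inferInstance
  letI : Field S := fieldOfFiniteDimensional ℝ S
  exact classifyRealField S
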